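/- Per-dimension completeness of the under-approximation branches (one step of Theorem 3): for every finite set V ⊆ (Fin n → ℝ) and every index d : Fin n, the image of convexHull ℝ V under r_d is contained in the convex hull of the union of the two maximal branch outputs, i.e., r_d '' (convexHull ℝ V) ⊆ convexHull ℝ ({v ∈ V | 0 ≤ v d} ∪ {Proj_d v | v ∈ V, v d ≤ 0} ∪ I_d(V)). -/

import Mathlib

/-- The coordinate ReLU map acting only on dimension `d`. -/
noncomputable def reluD {n : ℕ} (d : Fin n) (x : Fin n → ℝ) : Fin n → ℝ :=
  Function.update x d (max (x d) 0)

/-- The coordinate projection onto the hyperplane `{x | x d = 0}`. -/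
def projD {n : ℕ} (d : Fin n) (x : Fin n → ℝ) : Fin n → ℝ :=
  Function.update x d 0

/-- The intersection-point set `I_d(V)`. -/
def interPts {n : ℕ} (d : Fin n) (V : Set (Fin n → ℝ)) : Set (Fin n → ℝ) :=
  {x | ∃ v ∈ V, ∃ w ∈ V, v d > 0 ∧ w d < 0 ∧
    x = ((-(w d)) / (v d - w d)) • v + ((v d) / (v d - w d)) • w}

/-- `projD` as a linear map. -/
def projL {n : ℕ} (d : Fin n) : (Fin n → ℝ) →ₗ[ℝ] (Fin n → ℝ) where
  toFun := projD d
  map_add' x y := by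
    funext i
    by_cases h : i = d <;> simp [projD, Function.update_apply, h]
  map_smul' c x := by
    funext i
    by_cases h : i = d <;> simp [projD, Function.update_apply, h]

lemma projD_eq_self {n : ℕ} {d : Fin n} {x : Fin n → ℝ} (h : x d = 0) :
    projD d x = x := by
  rw [projD, ← h, Function.update_eq_self]

lemma projD_smul {n : ℕ} (d : Fin n) (c : ℝ) (x : Fin n → ℝ) :
    projD d (c • x) = c • projD d x := map_smul (projL d) c x

lemma projD_add {n : ℕ} (d : Fin n) (x y : Fin n → ℝ) :
    projD d (x + y) = projD d x + projD d y := map_add (projL d) x y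

lemma projD_sum {n : ℕ} (d : Fin n) {α : Type*} (s : Finset α) (f : α → Fin n → ℝ) :
    projD d (∑ i ∈ s, f i) = ∑ i ∈ s, projD d (f i) := map_sum (projL d) f s

lemma sum_sum_smul_left {n : ℕ} {α : Type*} (s t : Finset α) (a b : α → ℝ)
    (z : α → Fin n → ℝ) :
    ∑ v ∈ s, ∑ u ∈ t, (a v * b u) • z v = (∑ u ∈ t, b u) • ∑ v ∈ s, a v • z v := by
  rw [Finset.smul_sum]
  refine Finset.sum_congr rfl fun v _ => ?_
  rw [← Finset.sum_smul, ← Finset.mul_sum, smul_smul, mul_comm]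

lemma sum_sum_smul_right {n : ℕ} {α : Type*} (s t : Finset α) (a b : α → ℝ)
    (z : α → Fin n → ℝ) :
    ∑ v ∈ s, ∑ u ∈ t, (a v * b u) • z u = (∑ v ∈ s, a v) • ∑ u ∈ t, b u • z u := by
  rw [Finset.sum_comm, Finset.smul_sum]
  refine Finset.sum_congr rfl fun u _ => ?_
  rw [← Finset.sum_smul, ← Finset.sum_mul, smul_smul]

/-- Per-dimension completeness of the under-approximation branches. -/
theorem reluD_image_subset_cvx_branches {n : ℕ} (V : Set (Fin n → ℝ))
    (hV : V.Finite) (d : Fin n) :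
    reluD d '' (convexHull ℝ V) ⊆
      convexHull ℝ ({v ∈ V | 0 ≤ v d} ∪
        {y | ∃ v ∈ V, v d ≤ 0 ∧ y = projD d v} ∪ interPts d V) := by
  classical
  rintro y ⟨x, hx, rfl⟩
  set S : Set (Fin n → ℝ) := {v ∈ V | 0 ≤ v d} ∪
      {y | ∃ v ∈ V, v d ≤ 0 ∧ y = projD d v} ∪ interPts d V with hS
  rw [← hV.coe_toFinset, Finset.convexHull_eq] at hx
  obtain ⟨lam, hlam0, hlam1, hcm⟩ := hx
  set F := hV.toFinset with hF
  have hmemV : ∀ v ∈ F, v ∈ V := fun v hv => hV.mem_toFinset.mp hv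
  have hxeq : ∑ v ∈ F, lam v • v = x := by
    rw [← hcm, Finset.centerMass_eq_of_sum_1 _ _ hlam1]
    simp only [id_eq]
  set Fp := F.filter (fun v => 0 < v d) with hFp
  set Fz := F.filter (fun v => v d = 0) with hFz
  set Fm := F.filter (fun v => v d < 0) with hFm
  have hsplit : ∀ (M : Type) [AddCommMonoid M] (f : (Fin n → ℝ) → M),
      ∑ v ∈ F, f v = ∑ v ∈ Fp, f v + ∑ v ∈ Fz, f v + ∑ v ∈ Fm, f v := by
    intro M _ f
    rw [← Finset.sum_filter_add_sum_filter_not F (fun v => 0 < v d) f, add_assoc]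
    congr 1
    rw [← Finset.sum_filter_add_sum_filter_not (F.filter (fun v => ¬ 0 < v d))
      (fun v => v d = 0) f, Finset.filter_filter, Finset.filter_filter]
    congr 1
    · apply Finset.sum_congr _ fun _ _ => rfl
      apply Finset.filter_congr
      intro v _
      constructor
      · exact fun h => h.2
      · exact fun h => ⟨not_lt.mpr (le_of_eq h), h⟩
    · apply Finset.sum_congr _ fun _ _ => rfl
      apply Finset.filter_congr
      intro v _
      constructor
      · exact fun h => lt_of_le_of_ne (not_lt.mp h.1) h.2
      · exact fun h => ⟨not_lt.mpr h.le, ne_of_lt h⟩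
  have hSA : ∀ v ∈ F, 0 ≤ v d → v ∈ S := by
    intro v hv h
    exact Set.mem_union_left _ (Set.mem_union_left _ ⟨hmemV v hv, h⟩)
  have hSB : ∀ v ∈ F, v d ≤ 0 → projD d v ∈ S := by
    intro v hv h
    exact Set.mem_union_left _ (Set.mem_union_right _ ⟨v, hmemV v hv, h, rfl⟩)
  set mpt : (Fin n → ℝ) → (Fin n → ℝ) → (Fin n → ℝ) := fun v u =>
    ((-(u d)) / (v d - u d)) • v + ((v d) / (v d - u d)) • u with hmpt
  have hSC : ∀ v ∈ Fp, ∀ u ∈ Fm, mpt v u ∈ S := by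
    intro v hv u hu
    refine Set.mem_union_right _
      ⟨v, hmemV v (Finset.filter_subset _ _ hv), u, hmemV u (Finset.filter_subset _ _ hu),
        (Finset.mem_filter.mp hv).2, (Finset.mem_filter.mp hu).2, rfl⟩
  set Tp := ∑ v ∈ Fp, lam v * v d with hTpdef
  set Tm := ∑ v ∈ Fm, lam v * (-(v d)) with hTmdef
  have hlamF : ∀ v ∈ Fp, 0 ≤ lam v := fun v hv => hlam0 v (Finset.filter_subset _ _ hv)
  have hlamM : ∀ v ∈ Fm, 0 ≤ lam v := fun v hv => hlam0 v (Finset.filter_subset _ _ hv)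
  have hTp0 : 0 ≤ Tp :=
    Finset.sum_nonneg fun v hv => mul_nonneg (hlamF v hv) (Finset.mem_filter.mp hv).2.le
  have hTm0 : 0 ≤ Tm :=
    Finset.sum_nonneg fun v hv => mul_nonneg (hlamM v hv)
      (by have := (Finset.mem_filter.mp hv).2; linarith)
  have hxd : x d = Tp - Tm := by
    have h1 : x d = ∑ v ∈ F, lam v * v d := by
      rw [← hxeq]
      rw [Finset.sum_apply]
      exact Finset.sum_congr rfl fun v _ => rfl
    rw [h1, hsplit ℝ (fun v => lam v * v d)]
    have h2 : ∑ v ∈ Fz, lam v * v d = 0 :=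
      Finset.sum_eq_zero fun v hv => by rw [(Finset.mem_filter.mp hv).2, mul_zero]
    have h3 : ∑ v ∈ Fm, lam v * v d = -Tm := by
      rw [hTmdef, ← Finset.sum_neg_distrib]
      exact Finset.sum_congr rfl fun v _ => by ring
    rw [h2, h3]; ring
  have hsplitlam := hsplit ℝ lam
  rw [hlam1] at hsplitlam
  rcases le_total 0 (x d) with hxpos | hxneg
  · -- case x d ≥ 0 : reluD d x = x
    have hrel : reluD d x = x := by
      rw [reluD, max_eq_left hxpos, Function.update_eq_self]
    rw [hrel]
    by_cases hTmz : Tm = 0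
    · -- all negative-side weights vanish
      have hzero : ∀ u ∈ Fm, lam u = 0 := by
        intro u hu
        have hterm := (Finset.sum_eq_zero_iff_of_nonneg
          (fun v hv => mul_nonneg (hlamM v hv)
            (by have := (Finset.mem_filter.mp hv).2; linarith))).mp hTmz u hu
        have hne : -(u d) ≠ 0 := by
          have := (Finset.mem_filter.mp hu).2; intro h; linarith [neg_eq_zero.mp h]
        exact (mul_eq_zero.mp hterm).resolve_right hne
      set Fnn := F.filter (fun v => 0 ≤ v d) with hFnn
      have hfner : F.filter (fun v => ¬ 0 ≤ v d) = Fm := by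
        apply Finset.filter_congr
        intro v _; simp [not_le]
      have hsplit2 := Finset.sum_filter_add_sum_filter_not F (fun v => 0 ≤ v d) lam
      rw [hfner, hlam1] at hsplit2
      have hmz : ∑ v ∈ Fm, lam v = 0 := Finset.sum_eq_zero hzero
      have hsum2 : ∑ v ∈ Fnn, lam v = 1 := by rw [← hFnn] at hsplit2; linarith
      have hvec2 : ∑ v ∈ Fnn, lam v • v = x := by
        have hsplit3 := Finset.sum_filter_add_sum_filter_not F (fun v => 0 ≤ v d)
          (fun v => lam v • v)
        rw [hfner, hxeq] at hsplit3
        have hmz2 : ∑ v ∈ Fm, lam v • v = 0 :=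
          Finset.sum_eq_zero fun v hv => by rw [hzero v hv, zero_smul]
        rw [← hFnn] at hsplit3
        rw [← hsplit3, hmz2, add_zero]
      have hmem := Finset.centerMass_mem_convexHull (s := S) Fnn
        (fun v hv => hlam0 v (Finset.filter_subset _ _ hv))
        (by rw [hsum2]; norm_num)
        (fun v hv => hSA v (Finset.filter_subset _ _ hv) (Finset.mem_filter.mp hv).2)
      rw [Finset.centerMass_eq_of_sum_1 _ _ hsum2] at hmem
      try simp only [id_eq] at hmem
      rwa [hvec2] at hmem
    · have hTmpos : 0 < Tm := lt_of_le_of_ne hTm0 (Ne.symm hTmz)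
      have hTppos : 0 < Tp := by linarith [hxd, hxpos]
      have hTpne : Tp ≠ 0 := ne_of_gt hTppos
      set t : Finset (((Fin n → ℝ) ⊕ (Fin n → ℝ)) ⊕ ((Fin n → ℝ) × (Fin n → ℝ))) :=
        (Fp.disjSum Fz).disjSum (Fp ×ˢ Fm) with ht
      set W : ((Fin n → ℝ) ⊕ (Fin n → ℝ)) ⊕ ((Fin n → ℝ) × (Fin n → ℝ)) → ℝ :=
        Sum.elim (Sum.elim (fun v => lam v * (1 - Tm / Tp)) lam)
          (fun p => lam p.1 * lam p.2 * (p.1 d - p.2 d) / Tp) with hW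
      set Z : ((Fin n → ℝ) ⊕ (Fin n → ℝ)) ⊕ ((Fin n → ℝ) × (Fin n → ℝ)) → (Fin n → ℝ) :=
        Sum.elim (Sum.elim id id) (fun p => mpt p.1 p.2) with hZ
      have hTmTp : Tm / Tp ≤ 1 := by
        rw [div_le_one hTppos]; linarith [hxd, hxpos]
      have hW0 : ∀ i ∈ t, 0 ≤ W i := by
        rintro ((v | v) | ⟨v, u⟩) hi
        · exact mul_nonneg (hlam0 v (Finset.filter_subset _ _
            ((Finset.inl_mem_disjSum.mp (Finset.inl_mem_disjSum.mp hi))))) (by linarith)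
        · exact hlam0 v (Finset.filter_subset _ _
            (Finset.inr_mem_disjSum.mp (Finset.inl_mem_disjSum.mp hi)))
        · have hmem := Finset.mem_product.mp (Finset.inr_mem_disjSum.mp hi)
          have hv := (Finset.mem_filter.mp hmem.1).2
          have hu := (Finset.mem_filter.mp hmem.2).2
          apply div_nonneg _ hTp0
          exact mul_nonneg (mul_nonneg (hlamF _ hmem.1) (hlamM _ hmem.2)) (by linarith)
      have hpairsum : ∑ p ∈ Fp ×ˢ Fm, lam p.1 * lam p.2 * (p.1 d - p.2 d) / Tp
          = Tp * (∑ u ∈ Fm, lam u) / Tp + (∑ v ∈ Fp, lam v) * Tm / Tp := by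
        rw [Finset.sum_product]
        have key : ∀ v ∈ Fp, ∀ u ∈ Fm, lam v * lam u * (v d - u d) / Tp
            = (lam v * v d) * (lam u / Tp) + (lam v / Tp) * (lam u * (-(u d))) := by
          intro v _ u _
          field_simp
          ring
        rw [Finset.sum_congr rfl fun v hv => Finset.sum_congr rfl fun u hu => key v hv u hu]
        rw [Finset.sum_congr rfl fun v (_ : v ∈ Fp) => Finset.sum_add_distrib]
        rw [Finset.sum_add_distrib, ← Finset.sum_mul_sum, ← Finset.sum_mul_sum]
        rw [← Finset.sum_div, ← Finset.sum_div, ← hTpdef, ← hTmdef]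
        ring
      have hWsum : ∑ i ∈ t, W i = 1 := by
        rw [ht, hW, Finset.sum_disjSum, Finset.sum_disjSum]
        simp only [Sum.elim_inl, Sum.elim_inr]
        rw [hpairsum, ← Finset.sum_mul]
        have h1 : Tp * (∑ u ∈ Fm, lam u) / Tp = ∑ u ∈ Fm, lam u := by
          field_simp
        rw [h1]
        field_simp
        linear_combination (-Tp) * hsplitlam
      have hZS : ∀ i ∈ t, Z i ∈ S := by
        rintro ((v | v) | ⟨v, u⟩) hi
        · have hv := Finset.inl_mem_disjSum.mp (Finset.inl_mem_disjSum.mp hi)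
          exact hSA v (Finset.filter_subset _ _ hv) (Finset.mem_filter.mp hv).2.le
        · have hv := Finset.inr_mem_disjSum.mp (Finset.inl_mem_disjSum.mp hi)
          exact hSA v (Finset.filter_subset _ _ hv) (le_of_eq (Finset.mem_filter.mp hv).2.symm)
        · have hmem := Finset.mem_product.mp (Finset.inr_mem_disjSum.mp hi)
          exact hSC _ hmem.1 _ hmem.2
      have hmain : ∑ i ∈ t, W i • Z i = x := by
        rw [ht, hW, hZ, Finset.sum_disjSum, Finset.sum_disjSum]
        simp only [Sum.elim_inl, Sum.elim_inr, id_eq]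
        rw [Finset.sum_product]
        have key : ∀ v ∈ Fp, ∀ u ∈ Fm, (lam v * lam u * (v d - u d) / Tp) • mpt v u
            = (lam v * (lam u * (-(u d)) / Tp)) • v + ((lam v * v d / Tp) * lam u) • u := by
          intro v hv u hu
          have hvd := (Finset.mem_filter.mp hv).2
          have hud := (Finset.mem_filter.mp hu).2
          have hΔ : v d - u d ≠ 0 := by intro h; linarith [sub_eq_zero.mp h]
          rw [hmpt]
          rw [smul_add, smul_smul, smul_smul]
          congr 1
          · congr 1
            field_simp
          · congr 1
            field_simp
        rw [Finset.sum_congr rfl fun v hv => Finset.sum_congr rfl fun u hu => key v hv u hu]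
        rw [Finset.sum_congr rfl fun v (_ : v ∈ Fp) => Finset.sum_add_distrib]
        rw [Finset.sum_add_distrib, sum_sum_smul_left, sum_sum_smul_right]
        have hb : ∑ u ∈ Fm, lam u * (-(u d)) / Tp = Tm / Tp := by
          rw [← Finset.sum_div, ← hTmdef]
        have ha : ∑ v ∈ Fp, lam v * v d / Tp = 1 := by
          rw [← Finset.sum_div, ← hTpdef]; field_simp
        rw [hb, ha, one_smul]
        have hleft : ∑ v ∈ Fp, (lam v * (1 - Tm / Tp)) • v
            = (∑ v ∈ Fp, lam v • v) - (Tm / Tp) • ∑ v ∈ Fp, lam v • v := by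
          rw [Finset.smul_sum, ← Finset.sum_sub_distrib]
          refine Finset.sum_congr rfl fun v _ => ?_
          rw [smul_smul, ← sub_smul]
          congr 1
          ring
        rw [hleft]
        have hx2 := hsplit (Fin n → ℝ) (fun v => lam v • v)
        rw [hxeq] at hx2
        rw [hx2]
        abel
      have hmem := Finset.centerMass_mem_convexHull (s := S) t hW0
        (by rw [hWsum]; norm_num) hZS
      rwa [Finset.centerMass_eq_of_sum_1 _ _ hWsum, hmain] at hmem
  · -- case x d ≤ 0 : reluD d x = projD d x
    have hrel : reluD d x = projD d x := by
      rw [reluD, projD, max_eq_right hxneg]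
    rw [hrel]
    have hpx : projD d x = ∑ v ∈ F, lam v • projD d v := by
      rw [← hxeq, projD_sum]
      exact Finset.sum_congr rfl fun v _ => projD_smul d (lam v) v
    by_cases hTpz : Tp = 0
    · have hzero : ∀ v ∈ Fp, lam v = 0 := by
        intro v hv
        have hterm := (Finset.sum_eq_zero_iff_of_nonneg
          (fun v hv => mul_nonneg (hlamF v hv) (Finset.mem_filter.mp hv).2.le)).mp hTpz v hv
        have hne : v d ≠ 0 := ne_of_gt (Finset.mem_filter.mp hv).2
        exact (mul_eq_zero.mp hterm).resolve_right hne
      set Fnp := F.filter (fun v => v d ≤ 0) with hFnp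
      have hfner : F.filter (fun v => ¬ v d ≤ 0) = Fp := by
        apply Finset.filter_congr
        intro v _; simp [not_le]
      have hsplit2 := Finset.sum_filter_add_sum_filter_not F (fun v => v d ≤ 0) lam
      rw [hfner, hlam1] at hsplit2
      have hpz : ∑ v ∈ Fp, lam v = 0 := Finset.sum_eq_zero hzero
      have hsum2 : ∑ v ∈ Fnp, lam v = 1 := by rw [← hFnp] at hsplit2; linarith
      have hvec2 : ∑ v ∈ Fnp, lam v • projD d v = projD d x := by
        have hsplit3 := Finset.sum_filter_add_sum_filter_not F (fun v => v d ≤ 0)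
          (fun v => lam v • projD d v)
        rw [hfner, ← hpx] at hsplit3
        have hpz2 : ∑ v ∈ Fp, lam v • projD d v = 0 :=
          Finset.sum_eq_zero fun v hv => by rw [hzero v hv, zero_smul]
        rw [← hFnp] at hsplit3
        rw [← hsplit3, hpz2, add_zero]
      have hmem := Finset.centerMass_mem_convexHull (s := S) Fnp
        (fun v hv => hlam0 v (Finset.filter_subset _ _ hv))
        (by rw [hsum2]; norm_num)
        (fun v hv => hSB v (Finset.filter_subset _ _ hv) (Finset.mem_filter.mp hv).2)
      rwa [Finset.centerMass_eq_of_sum_1 _ _ hsum2, hvec2] at hmem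
    · have hTppos : 0 < Tp := lt_of_le_of_ne hTp0 (Ne.symm hTpz)
      have hTmpos : 0 < Tm := by linarith [hxd, hxneg]
      have hTmne : Tm ≠ 0 := ne_of_gt hTmpos
      set t : Finset (((Fin n → ℝ) ⊕ (Fin n → ℝ)) ⊕ ((Fin n → ℝ) × (Fin n → ℝ))) :=
        (Fm.disjSum Fz).disjSum (Fp ×ˢ Fm) with ht
      set W : ((Fin n → ℝ) ⊕ (Fin n → ℝ)) ⊕ ((Fin n → ℝ) × (Fin n → ℝ)) → ℝ :=
        Sum.elim (Sum.elim (fun u => lam u * (1 - Tp / Tm)) lam)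
          (fun p => lam p.1 * lam p.2 * (p.1 d - p.2 d) / Tm) with hW
      set Z : ((Fin n → ℝ) ⊕ (Fin n → ℝ)) ⊕ ((Fin n → ℝ) × (Fin n → ℝ)) → (Fin n → ℝ) :=
        Sum.elim (Sum.elim (fun u => projD d u) id) (fun p => mpt p.1 p.2) with hZ
      have hTpTm : Tp / Tm ≤ 1 := by
        rw [div_le_one hTmpos]; linarith [hxd, hxneg]
      have hW0 : ∀ i ∈ t, 0 ≤ W i := by
        rintro ((v | v) | ⟨v, u⟩) hi
        · exact mul_nonneg (hlam0 v (Finset.filter_subset _ _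
            ((Finset.inl_mem_disjSum.mp (Finset.inl_mem_disjSum.mp hi))))) (by linarith)
        · exact hlam0 v (Finset.filter_subset _ _
            (Finset.inr_mem_disjSum.mp (Finset.inl_mem_disjSum.mp hi)))
        · have hmem := Finset.mem_product.mp (Finset.inr_mem_disjSum.mp hi)
          have hv := (Finset.mem_filter.mp hmem.1).2
          have hu := (Finset.mem_filter.mp hmem.2).2
          apply div_nonneg _ hTm0
          exact mul_nonneg (mul_nonneg (hlamF _ hmem.1) (hlamM _ hmem.2)) (by linarith)
      have hpairsum : ∑ p ∈ Fp ×ˢ Fm, lam p.1 * lam p.2 * (p.1 d - p.2 d) / Tm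
          = Tp * (∑ u ∈ Fm, lam u) / Tm + (∑ v ∈ Fp, lam v) * Tm / Tm := by
        rw [Finset.sum_product]
        have key : ∀ v ∈ Fp, ∀ u ∈ Fm, lam v * lam u * (v d - u d) / Tm
            = (lam v * v d) * (lam u / Tm) + (lam v / Tm) * (lam u * (-(u d))) := by
          intro v _ u _
          field_simp
          ring
        rw [Finset.sum_congr rfl fun v hv => Finset.sum_congr rfl fun u hu => key v hv u hu]
        rw [Finset.sum_congr rfl fun v (_ : v ∈ Fp) => Finset.sum_add_distrib]
        rw [Finset.sum_add_distrib, ← Finset.sum_mul_sum, ← Finset.sum_mul_sum]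
        rw [← Finset.sum_div, ← Finset.sum_div, ← hTpdef, ← hTmdef]
        ring
      have hWsum : ∑ i ∈ t, W i = 1 := by
        rw [ht, hW, Finset.sum_disjSum, Finset.sum_disjSum]
        simp only [Sum.elim_inl, Sum.elim_inr]
        rw [hpairsum, ← Finset.sum_mul]
        field_simp
        linear_combination (-Tm) * hsplitlam
      have hZS : ∀ i ∈ t, Z i ∈ S := by
        rintro ((v | v) | ⟨v, u⟩) hi
        · have hv := Finset.inl_mem_disjSum.mp (Finset.inl_mem_disjSum.mp hi)
          exact hSB v (Finset.filter_subset _ _ hv) (Finset.mem_filter.mp hv).2.le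
        · have hv := Finset.inr_mem_disjSum.mp (Finset.inl_mem_disjSum.mp hi)
          exact hSA v (Finset.filter_subset _ _ hv) (le_of_eq (Finset.mem_filter.mp hv).2.symm)
        · have hmem := Finset.mem_product.mp (Finset.inr_mem_disjSum.mp hi)
          exact hSC _ hmem.1 _ hmem.2
      have hmain : ∑ i ∈ t, W i • Z i = projD d x := by
        rw [ht, hW, hZ, Finset.sum_disjSum, Finset.sum_disjSum]
        simp only [Sum.elim_inl, Sum.elim_inr, id_eq]
        rw [Finset.sum_product]
        have key : ∀ v ∈ Fp, ∀ u ∈ Fm, (lam v * lam u * (v d - u d) / Tm) • mpt v u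
            = (lam v * (lam u * (-(u d)) / Tm)) • projD d v
              + ((lam v * v d / Tm) * lam u) • projD d u := by
          intro v hv u hu
          have hvd := (Finset.mem_filter.mp hv).2
          have hud := (Finset.mem_filter.mp hu).2
          have hΔ : v d - u d ≠ 0 := by intro h; linarith [sub_eq_zero.mp h]
          have hmd : (mpt v u) d = 0 := by
            rw [hmpt]
            simp only [Pi.add_apply, Pi.smul_apply, smul_eq_mul]
            field_simp
            ring
          have hmproj : mpt v u = ((-(u d)) / (v d - u d)) • projD d v
              + ((v d) / (v d - u d)) • projD d u := by
            conv_lhs => rw [← projD_eq_self hmd, hmpt]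
            rw [projD_add, projD_smul, projD_smul]
          rw [hmproj]
          rw [smul_add, smul_smul, smul_smul]
          congr 1
          · congr 1
            field_simp
          · congr 1
            field_simp
        rw [Finset.sum_congr rfl fun v hv => Finset.sum_congr rfl fun u hu => key v hv u hu]
        rw [Finset.sum_congr rfl fun v (_ : v ∈ Fp) => Finset.sum_add_distrib]
        rw [Finset.sum_add_distrib, sum_sum_smul_left, sum_sum_smul_right]
        have hb : ∑ u ∈ Fm, lam u * (-(u d)) / Tm = 1 := by
          rw [← Finset.sum_div, ← hTmdef]; field_simp
        have ha : ∑ v ∈ Fp, lam v * v d / Tm = Tp / Tm := by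
          rw [← Finset.sum_div, ← hTpdef]
        rw [hb, ha, one_smul]
        have hleft : ∑ u ∈ Fm, (lam u * (1 - Tp / Tm)) • projD d u
            = (∑ u ∈ Fm, lam u • projD d u) - (Tp / Tm) • ∑ u ∈ Fm, lam u • projD d u := by
          rw [Finset.smul_sum, ← Finset.sum_sub_distrib]
          refine Finset.sum_congr rfl fun u _ => ?_
          rw [smul_smul, ← sub_smul]
          congr 1
          ring
        rw [hleft]
        have hzeq : ∑ v ∈ Fz, lam v • v = ∑ v ∈ Fz, lam v • projD d v := by
          refine Finset.sum_congr rfl fun v hv => ?_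
          rw [projD_eq_self (Finset.mem_filter.mp hv).2]
        rw [hzeq]
        have hx2 := hsplit (Fin n → ℝ) (fun v => lam v • projD d v)
        rw [← hpx] at hx2
        rw [hx2]
        abel
      have hmem := Finset.centerMass_mem_convexHull (s := S) t hW0
        (by rw [hWsum]; norm_num) hZS
      rwa [Finset.centerMass_eq_of_sum_1 _ _ hWsum, hmain] at hmem
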